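/- Let d≥2, K(x):=x/|x|^d, α∈(0,1), and p∈[1, d/(d−1+α)). Then K belongs to the local fractional Sobolev space W^{α,p}_loc(ℝ^d;ℝ^d): for every R>0, ∫_{B_R}∫_{B_R} |K(x)−K(y)|^p / |x−y|^{d+αp} dx dy < ∞ (and K∈L^p(B_R;ℝ^d)). -/

import Mathlib

open MeasureTheory Filter Set Metric Topology
open scoped ENNReal NNReal

noncomputable section

/-- `Ed d` is the Euclidean space `ℝ^d`. -/
abbrev Ed (d : ℕ) : Type := EuclideanSpace ℝ (Fin d)

/-- The singular kernel `K(x) = x/|x|^d`. -/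
noncomputable def kern (d : ℕ) (x : Ed d) : Ed d := (‖x‖ ^ d)⁻¹ • x

lemma abs_pow_sub_pow_le' {a b M : ℝ} (ha : 0 ≤ a) (hb : 0 ≤ b) (haM : a ≤ M)
    (hbM : b ≤ M) (n : ℕ) : |a ^ n - b ^ n| ≤ n * M ^ (n - 1) * |a - b| := by
  have hM : 0 ≤ M := le_trans ha haM
  have h := geom_sum₂_mul a b n
  calc |a ^ n - b ^ n| = |∑ i ∈ Finset.range n, a ^ i * b ^ (n - 1 - i)| * |a - b| := by
        rw [← abs_mul, h]
    _ ≤ (n * M ^ (n - 1)) * |a - b| := by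
        gcongr
        calc |∑ i ∈ Finset.range n, a ^ i * b ^ (n - 1 - i)|
            ≤ ∑ i ∈ Finset.range n, |a ^ i * b ^ (n - 1 - i)| := Finset.abs_sum_le_sum_abs _ _
          _ ≤ ∑ _i ∈ Finset.range n, M ^ (n - 1) := by
              apply Finset.sum_le_sum
              intro i hi
              rw [Finset.mem_range] at hi
              rw [abs_mul, abs_pow, abs_pow, abs_of_nonneg ha, abs_of_nonneg hb]
              calc a ^ i * b ^ (n - 1 - i) ≤ M ^ i * M ^ (n - 1 - i) := by
                    gcongr
                _ = M ^ (n - 1) := by rw [← pow_add]; congr 1; omega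
          _ = n * M ^ (n - 1) := by simp [mul_comm]


lemma norm_kern {d : ℕ} {x : Ed d} (hx : x ≠ 0) : ‖kern d x‖ = ‖x‖ ^ ((1 : ℝ) - d) := by
  have hx0 : (0:ℝ) < ‖x‖ := norm_pos_iff.mpr hx
  rw [kern, norm_smul, Real.norm_eq_abs, abs_inv, abs_pow, abs_of_nonneg (norm_nonneg x)]
  rw [show ((1:ℝ) - d) = -(d:ℝ) + 1 by ring, Real.rpow_add hx0, Real.rpow_one,
    Real.rpow_neg (norm_nonneg x), Real.rpow_natCast]


lemma add_rpow_le {a b q : ℝ} (ha : 0 ≤ a) (hb : 0 ≤ b) (hq : 0 ≤ q) :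
    (a + b) ^ q ≤ 2 ^ q * (a ^ q + b ^ q) := by
  rcases le_total a b with h | h
  · calc (a + b) ^ q ≤ (2 * b) ^ q := by
          apply Real.rpow_le_rpow (by linarith) (by linarith) hq
      _ = 2 ^ q * b ^ q := Real.mul_rpow (by norm_num) hb
      _ ≤ 2 ^ q * (a ^ q + b ^ q) := by
          have := Real.rpow_nonneg ha q
          have h2 : (0:ℝ) ≤ 2 ^ q := Real.rpow_nonneg (by norm_num) q
          nlinarith
  · calc (a + b) ^ q ≤ (2 * a) ^ q := by
          apply Real.rpow_le_rpow (by linarith) (by linarith) hq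
      _ = 2 ^ q * a ^ q := Real.mul_rpow (by norm_num) ha
      _ ≤ 2 ^ q * (a ^ q + b ^ q) := by
          have := Real.rpow_nonneg hb q
          have h2 : (0:ℝ) ≤ 2 ^ q := Real.rpow_nonneg (by norm_num) q
          nlinarith


lemma kern_lip {d : ℕ} (hd : 1 ≤ d) {x y : Ed d} (hx : x ≠ 0)
    (hxy : ‖x - y‖ ≤ ‖x‖ / 2) :
    ‖kern d x - kern d y‖ ≤ (1 + d * 4 ^ d) * ‖x - y‖ * (‖x‖ ^ d)⁻¹ := by
  set a := ‖x‖ with ha_def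
  set b := ‖y‖ with hb_def
  have ha : 0 < a := norm_pos_iff.mpr hx
  have hb2 : a / 2 ≤ b := by
    have : a - ‖x - y‖ ≤ b := by
      have := norm_sub_norm_le x y
      linarith [this]
    linarith
  have hb : 0 < b := lt_of_lt_of_le (by linarith) hb2
  have hba : |b - a| ≤ ‖x - y‖ := by
    rw [abs_sub_comm]
    exact (abs_norm_sub_norm_le x y)
  have hbu : b ≤ 2 * a := by
    have : b - a ≤ ‖x - y‖ := le_trans (le_abs_self _) hba
    linarith
  have hdec : kern d x - kern d y = (a ^ d)⁻¹ • (x - y) + ((a ^ d)⁻¹ - (b ^ d)⁻¹) • y := by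
    simp only [kern, ← ha_def, ← hb_def]
    module
  have had : (0:ℝ) < a ^ d := pow_pos ha d
  have hbd : (0:ℝ) < b ^ d := pow_pos hb d
  have habs : |(a ^ d)⁻¹ - (b ^ d)⁻¹| = |b ^ d - a ^ d| / (a ^ d * b ^ d) := by
    rw [inv_sub_inv had.ne' hbd.ne', abs_div, abs_of_pos (by positivity : (0:ℝ) < a ^ d * b ^ d)]
  have hnum : |b ^ d - a ^ d| ≤ d * (2 * a) ^ (d - 1) * ‖x - y‖ := by
    calc |b ^ d - a ^ d| ≤ d * (2 * a) ^ (d - 1) * |b - a| :=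
          abs_pow_sub_pow_le' hb.le ha.le hbu (by linarith) d
      _ ≤ d * (2 * a) ^ (d - 1) * ‖x - y‖ := by
          gcongr
  -- bound the second term
  have hT2 : |(a ^ d)⁻¹ - (b ^ d)⁻¹| * b ≤ d * 4 ^ (d - 1) * ‖x - y‖ * (a ^ d)⁻¹ := by
    rw [habs, div_mul_eq_mul_div]
    rw [div_le_iff₀ (by positivity)]
    -- |b^d - a^d| * b ≤ (d * 4^(d-1) * ‖x-y‖ * (a^d)⁻¹) * (a^d * b^d)
    have key : (2 * a) ^ (d - 1) * b ≤ 4 ^ (d - 1) * b ^ d := by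
      have h1 : b ^ d = b ^ (d - 1) * b := by
        conv_lhs => rw [show d = (d - 1) + 1 by omega]
        rw [pow_succ]
      rw [h1, ← mul_assoc]
      have : (2 * a) ^ (d - 1) ≤ 4 ^ (d-1) * b ^ (d - 1) := by
        calc (2 * a) ^ (d - 1) = 4 ^ (d-1) * (a / 2) ^ (d - 1) := by
              rw [← mul_pow]; ring_nf
          _ ≤ 4 ^ (d-1) * b ^ (d - 1) := by
              have : (a / 2) ^ (d-1) ≤ b ^ (d-1) := pow_le_pow_left₀ (by positivity) hb2 _
              nlinarith [pow_pos (show (0:ℝ)<4 by norm_num) (d-1)]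
      nlinarith
    calc |b ^ d - a ^ d| * b ≤ (d * (2 * a) ^ (d - 1) * ‖x - y‖) * b := by
          gcongr
      _ = (d * ‖x - y‖) * ((2 * a) ^ (d - 1) * b) := by ring
      _ ≤ (d * ‖x - y‖) * (4 ^ (d - 1) * b ^ d) := by
          gcongr
      _ = d * 4 ^ (d - 1) * ‖x - y‖ * (a ^ d)⁻¹ * (a ^ d * b ^ d) := by
          field_simp
  calc ‖kern d x - kern d y‖
      ≤ ‖(a ^ d)⁻¹ • (x - y)‖ + ‖((a ^ d)⁻¹ - (b ^ d)⁻¹) • y‖ := by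
        rw [hdec]; exact norm_add_le _ _
    _ = (a ^ d)⁻¹ * ‖x - y‖ + |(a ^ d)⁻¹ - (b ^ d)⁻¹| * b := by
        rw [norm_smul, norm_smul, Real.norm_eq_abs, Real.norm_eq_abs,
          abs_of_pos (inv_pos.mpr had)]
    _ ≤ (a ^ d)⁻¹ * ‖x - y‖ + d * 4 ^ (d - 1) * ‖x - y‖ * (a ^ d)⁻¹ := by linarith
    _ ≤ (1 + d * 4 ^ d) * ‖x - y‖ * (a ^ d)⁻¹ := by
        have h4 : (4:ℝ) ^ (d - 1) ≤ 4 ^ d := by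
          apply pow_le_pow_right₀ (by norm_num) (by omega)
        have hn : (0:ℝ) ≤ ‖x - y‖ := norm_nonneg _
        have hi : (0:ℝ) ≤ (a ^ d)⁻¹ := by positivity
        have hd0 : (0:ℝ) ≤ d := Nat.cast_nonneg d
        nlinarith [mul_nonneg hn hi, mul_nonneg (mul_nonneg hd0 hn) hi]


lemma rpow_div_helper {c k : ℝ} (e : ℝ) (hc : 0 ≤ c) (hk : 0 < k) :
    (c / k) ^ e = c ^ e * k ^ (-e) := by
  rw [Real.div_rpow hc hk.le, Real.rpow_neg hk.le, div_eq_mul_inv]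


lemma nontrivial_Ed {d : ℕ} (hd : 1 ≤ d) : Nontrivial (Ed d) := by
  have : 0 < Module.finrank ℝ (Ed d) := by
    rw [finrank_euclideanSpace_fin]; omega
  exact Module.nontrivial_of_finrank_pos this


lemma lint_rpow_ball {d : ℕ} (hd : 1 ≤ d) {β : ℝ} (hβ0 : 0 < β) (hβd : β < d) (ρ : ℝ) :
    ∫⁻ x in ball (0 : Ed d) ρ, ENNReal.ofReal (‖x‖ ^ (-β)) < ⊤ := by
  haveI : Nontrivial (Ed d) := nontrivial_Ed hd
  set μ := volume.restrict (ball (0 : Ed d) ρ) with hμ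
  have f_nn : 0 ≤ᵐ[μ] fun x : Ed d => ‖x‖ ^ (-β) :=
    ae_of_all _ fun x => Real.rpow_nonneg (norm_nonneg x) _
  have f_mble : AEMeasurable (fun x : Ed d => ‖x‖ ^ (-β)) μ := by fun_prop
  rw [lintegral_eq_lintegral_meas_le μ f_nn f_mble]
  have hsub : ∀ t : ℝ, 0 < t →
      {a : Ed d | t ≤ ‖a‖ ^ (-β)} ⊆ closedBall (0 : Ed d) (t ^ (-β⁻¹)) := by
    intro t ht a hat
    simp only [mem_setOf_eq] at hat
    have ha0 : a ≠ 0 := by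
      intro h
      rw [h, norm_zero, Real.zero_rpow (neg_ne_zero.mpr hβ0.ne')] at hat
      linarith
    have hna : 0 < ‖a‖ := norm_pos_iff.mpr ha0
    have h1 : (‖a‖ ^ (-β)) ^ (-β⁻¹) ≤ t ^ (-β⁻¹) :=
      Real.rpow_le_rpow_of_nonpos ht hat (neg_nonpos_of_nonneg (by positivity))
    rw [← Real.rpow_mul (norm_nonneg a), neg_mul_neg, mul_inv_cancel₀ hβ0.ne',
      Real.rpow_one] at h1
    rwa [mem_closedBall_zero_iff]
  calc ∫⁻ t in Ioi (0:ℝ), μ {a : Ed d | t ≤ ‖a‖ ^ (-β)}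
      ≤ ∫⁻ t in Ioc (0:ℝ) 1 ∪ Ioi 1, μ {a : Ed d | t ≤ ‖a‖ ^ (-β)} :=
        lintegral_mono_set Ioi_subset_Ioc_union_Ioi
    _ ≤ (∫⁻ t in Ioc (0:ℝ) 1, μ {a : Ed d | t ≤ ‖a‖ ^ (-β)}) +
          ∫⁻ t in Ioi (1:ℝ), μ {a : Ed d | t ≤ ‖a‖ ^ (-β)} := lintegral_union_le _ _ _
    _ < ⊤ := by
        apply ENNReal.add_lt_top.2
        constructor
        · calc ∫⁻ t in Ioc (0:ℝ) 1, μ {a : Ed d | t ≤ ‖a‖ ^ (-β)}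
              ≤ ∫⁻ _t in Ioc (0:ℝ) 1, volume (ball (0 : Ed d) ρ) := by
                apply lintegral_mono
                intro t
                calc μ {a : Ed d | t ≤ ‖a‖ ^ (-β)} ≤ μ univ := measure_mono (subset_univ _)
                  _ = volume (ball (0 : Ed d) ρ) := by
                      rw [hμ, Measure.restrict_apply_univ]
            _ = volume (ball (0 : Ed d) ρ) * volume (Ioc (0:ℝ) 1) := setLIntegral_const _ _
            _ < ⊤ := by
                apply ENNReal.mul_lt_top measure_ball_lt_top
                simp [Real.volume_Ioc]
        · have hlt : -(β⁻¹ * d) < -1 := by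
            rw [neg_lt_neg_iff]
            rw [← div_eq_inv_mul, lt_div_iff₀ hβ0]
            linarith
          calc ∫⁻ t in Ioi (1:ℝ), μ {a : Ed d | t ≤ ‖a‖ ^ (-β)}
              ≤ ∫⁻ t in Ioi (1:ℝ), ENNReal.ofReal (t ^ (-(β⁻¹ * d))) *
                  volume (ball (0 : Ed d) 1) := by
                apply setLIntegral_mono' measurableSet_Ioi
                intro t ht
                rw [mem_Ioi] at ht
                have ht0 : (0:ℝ) < t := by linarith
                calc μ {a : Ed d | t ≤ ‖a‖ ^ (-β)}
                    ≤ volume (closedBall (0 : Ed d) (t ^ (-β⁻¹))) :=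
                      (Measure.restrict_apply_le _ _).trans (measure_mono (hsub t ht0))
                  _ = ENNReal.ofReal ((t ^ (-β⁻¹)) ^ Module.finrank ℝ (Ed d)) *
                        volume (ball (0 : Ed d) 1) :=
                      Measure.addHaar_closedBall _ _ (Real.rpow_nonneg ht0.le _)
                  _ = ENNReal.ofReal (t ^ (-(β⁻¹ * d))) * volume (ball (0 : Ed d) 1) := by
                      congr 2
                      rw [finrank_euclideanSpace_fin, ← Real.rpow_natCast (t ^ (-β⁻¹)) d,
                        ← Real.rpow_mul ht0.le]
                      ring_nf
            _ = (∫⁻ t in Ioi (1:ℝ), ENNReal.ofReal (t ^ (-(β⁻¹ * d)))) *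
                  volume (ball (0 : Ed d) 1) :=
                lintegral_mul_const' _ _ measure_ball_lt_top.ne
            _ < ⊤ := ENNReal.mul_lt_top
                (IntegrableOn.setLIntegral_lt_top (integrableOn_Ioi_rpow_of_lt hlt one_pos))
                measure_ball_lt_top


lemma lint_translate {d : ℕ} {β : ℝ} {R : ℝ} {x : Ed d} (hx : x ∈ ball (0 : Ed d) R) :
    ∫⁻ y in ball (0 : Ed d) R, ENNReal.ofReal (‖x - y‖ ^ (-β)) ≤
      ∫⁻ z in ball (0 : Ed d) (2 * R), ENNReal.ofReal (‖z‖ ^ (-β)) := by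
  set g : Ed d → ℝ≥0∞ :=
    (ball (0 : Ed d) (2 * R)).indicator (fun z => ENNReal.ofReal (‖z‖ ^ (-β))) with hg
  have hgm : Measurable g := by
    apply Measurable.indicator _ measurableSet_ball
    fun_prop
  have hmem : ∀ y ∈ ball (0 : Ed d) R, x - y ∈ ball (0 : Ed d) (2 * R) := by
    intro y hy
    rw [mem_ball_zero_iff] at hx hy ⊢
    calc ‖x - y‖ ≤ ‖x‖ + ‖y‖ := norm_sub_le _ _
      _ < 2 * R := by linarith
  calc ∫⁻ y in ball (0 : Ed d) R, ENNReal.ofReal (‖x - y‖ ^ (-β))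
      = ∫⁻ y in ball (0 : Ed d) R, g (x - y) := by
        apply setLIntegral_congr_fun measurableSet_ball
        intro y hy
        show ENNReal.ofReal (‖x - y‖ ^ (-β)) = g (x - y)
        rw [hg, indicator_of_mem (hmem y hy)]
    _ ≤ ∫⁻ y, g (x - y) := setLIntegral_le_lintegral _ _
    _ = ∫⁻ z, g z := by
        have h := lintegral_map (μ := (volume : Measure (Ed d))) hgm
          (show Measurable fun t : Ed d => x - t by fun_prop)
        rw [Measure.map_sub_left_eq_self (volume : Measure (Ed d)) x] at h
        exact h.symm
    _ = ∫⁻ z in ball (0 : Ed d) (2 * R), ENNReal.ofReal (‖z‖ ^ (-β)) := by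
      rw [hg, lintegral_indicator measurableSet_ball]


lemma master {d : ℕ} (hd : 2 ≤ d) {α p β : ℝ} (hα0 : 0 < α) (hα1 : α < 1) (hp : 1 ≤ p)
    (key : p * ((d : ℝ) - 1 + α) < d) (hβ : β = ((d : ℝ) + p * ((d : ℝ) - 1 + α)) / 2) :
    ∃ C : ℝ, 0 ≤ C ∧ ∀ x y : Ed d, x ≠ 0 → y ≠ 0 → x ≠ y →
      ‖kern d x - kern d y‖ ^ p / ‖x - y‖ ^ ((d : ℝ) + α * p) ≤
        C * (‖x‖ ^ (-β) * ‖x - y‖ ^ (-β) + ‖x‖ ^ (-β) * ‖y‖ ^ (-β)) := by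
  have hD2 : (2 : ℝ) ≤ (d : ℝ) := by exact_mod_cast hd
  set D : ℝ := (d : ℝ) with hDdef
  have hp0 : (0 : ℝ) < p := by linarith
  set e1 : ℝ := p - α * p - D + β with he1def
  have he1 : 0 < e1 := by
    rw [he1def, hβ]
    nlinarith
  set s : ℝ := D + α * p - β with hsdef
  have hs : 0 < s := by
    rw [hsdef, hβ]
    nlinarith
  set C1 : ℝ := 1 + (d : ℝ) * 4 ^ d with hC1def
  have hC1 : (0 : ℝ) ≤ C1 := by positivity
  set CA : ℝ := C1 ^ p * (2 : ℝ) ^ (-e1) with hCAdef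
  set CB : ℝ := (2 : ℝ) ^ p * ((2 : ℝ) ^ s * (3 : ℝ) ^ β + (3 : ℝ) ^ s * (2 : ℝ) ^ β)
    with hCBdef
  have hβpos : 0 < β := by
    rw [hβ]
    nlinarith [mul_pos hp0 (show (0:ℝ) < D - 1 + α by linarith)]
  have hCA : 0 ≤ CA := by positivity
  have hCB : 0 ≤ CB := by positivity
  refine ⟨CA + CB, by positivity, ?_⟩
  intro x y hx hy hxy
  set a : ℝ := ‖x‖ with hadef
  set b : ℝ := ‖y‖ with hbdef
  set r : ℝ := ‖x - y‖ with hrdef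
  have ha : 0 < a := norm_pos_iff.mpr hx
  have hb : 0 < b := norm_pos_iff.mpr hy
  have hr : 0 < r := by
    rw [hrdef]
    exact norm_pos_iff.mpr (sub_ne_zero.mpr hxy)
  have ht1 : (0:ℝ) ≤ a ^ (-β) * r ^ (-β) := by positivity
  have ht2 : (0:ℝ) ≤ a ^ (-β) * b ^ (-β) := by positivity
  have hFrw : ‖kern d x - kern d y‖ ^ p / r ^ (D + α * p) =
      ‖kern d x - kern d y‖ ^ p * r ^ (-(D + α * p)) := by
    rw [Real.rpow_neg hr.le, div_eq_mul_inv]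
  rw [hFrw]
  rcases le_or_gt r (a / 2) with hcase | hcase
  · -- region A
    have step1 : ‖kern d x - kern d y‖ ≤ C1 * r * a ^ (-D) := by
      have h := kern_lip (by omega) hx hcase
      rwa [← Real.rpow_natCast a d, ← Real.rpow_neg ha.le] at h
    have step2 : ‖kern d x - kern d y‖ ^ p ≤ C1 ^ p * r ^ p * a ^ (-D * p) := by
      calc ‖kern d x - kern d y‖ ^ p ≤ (C1 * r * a ^ (-D)) ^ p :=
            Real.rpow_le_rpow (norm_nonneg _) step1 hp0.le
        _ = C1 ^ p * r ^ p * a ^ (-D * p) := by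
            rw [Real.mul_rpow (by positivity) (by positivity),
              Real.mul_rpow hC1 hr.le, Real.rpow_mul ha.le]
    have step3 : ‖kern d x - kern d y‖ ^ p * r ^ (-(D + α * p)) ≤
        C1 ^ p * a ^ (-D * p) * (r ^ (-β) * r ^ e1) := by
      have hexp : -β + e1 = p + -(D + α * p) := by rw [he1def]; ring
      have hmerge : r ^ p * r ^ (-(D + α * p)) = r ^ (-β) * r ^ e1 := by
        rw [← Real.rpow_add hr, ← Real.rpow_add hr, hexp]
      calc ‖kern d x - kern d y‖ ^ p * r ^ (-(D + α * p))
          ≤ (C1 ^ p * r ^ p * a ^ (-D * p)) * r ^ (-(D + α * p)) := by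
            apply mul_le_mul_of_nonneg_right step2 (by positivity)
        _ = C1 ^ p * a ^ (-D * p) * (r ^ p * r ^ (-(D + α * p))) := by ring
        _ = C1 ^ p * a ^ (-D * p) * (r ^ (-β) * r ^ e1) := by rw [hmerge]
    have step4 : r ^ e1 ≤ a ^ e1 * (2:ℝ) ^ (-e1) := by
      calc r ^ e1 ≤ (a / 2) ^ e1 := Real.rpow_le_rpow hr.le hcase he1.le
        _ = a ^ e1 * (2:ℝ) ^ (-e1) := rpow_div_helper e1 ha.le two_pos
    have step5 : C1 ^ p * a ^ (-D * p) * (r ^ (-β) * r ^ e1) ≤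
        CA * (a ^ (-β) * r ^ (-β)) := by
      have hcomb : a ^ (-D * p) * a ^ e1 = a ^ (-β) := by
        rw [← Real.rpow_add ha]
        congr 1
        rw [he1def, hβ]
        ring
      calc C1 ^ p * a ^ (-D * p) * (r ^ (-β) * r ^ e1)
          ≤ C1 ^ p * a ^ (-D * p) * (r ^ (-β) * (a ^ e1 * (2:ℝ) ^ (-e1))) := by
            apply mul_le_mul_of_nonneg_left _ (by positivity)
            apply mul_le_mul_of_nonneg_left step4 (by positivity)
        _ = CA * ((a ^ (-D * p) * a ^ e1) * r ^ (-β)) := by rw [hCAdef]; ring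
        _ = CA * (a ^ (-β) * r ^ (-β)) := by rw [hcomb]
    calc ‖kern d x - kern d y‖ ^ p * r ^ (-(D + α * p))
        ≤ CA * (a ^ (-β) * r ^ (-β)) := le_trans step3 step5
      _ ≤ (CA + CB) * (a ^ (-β) * r ^ (-β) + a ^ (-β) * b ^ (-β)) :=
          mul_le_mul (le_add_of_nonneg_right hCB) (le_add_of_nonneg_right ht2) ht1
            (by linarith)
  · -- region B
    have har : a ≤ 2 * r := by linarith
    have hbr : b ≤ 3 * r := by
      have h1 : b ≤ r + a := by
        calc b = ‖y - x + x‖ := by rw [hbdef]; congr 1; abel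
          _ ≤ ‖y - x‖ + ‖x‖ := norm_add_le _ _
          _ = r + a := by rw [norm_sub_rev, hrdef, hadef]
      linarith
    have crude : ‖kern d x - kern d y‖ ≤ a ^ ((1:ℝ) - D) + b ^ ((1:ℝ) - D) := by
      calc ‖kern d x - kern d y‖ ≤ ‖kern d x‖ + ‖kern d y‖ := norm_sub_le _ _
        _ = a ^ ((1:ℝ) - D) + b ^ ((1:ℝ) - D) := by rw [norm_kern hx, norm_kern hy]
    have powp : ‖kern d x - kern d y‖ ^ p ≤
        (2:ℝ) ^ p * (a ^ (((1:ℝ) - D) * p) + b ^ (((1:ℝ) - D) * p)) := by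
      calc ‖kern d x - kern d y‖ ^ p ≤ (a ^ ((1:ℝ) - D) + b ^ ((1:ℝ) - D)) ^ p :=
            Real.rpow_le_rpow (norm_nonneg _) crude hp0.le
        _ ≤ (2:ℝ) ^ p * ((a ^ ((1:ℝ) - D)) ^ p + (b ^ ((1:ℝ) - D)) ^ p) :=
            add_rpow_le (by positivity) (by positivity) hp0.le
        _ = (2:ℝ) ^ p * (a ^ (((1:ℝ) - D) * p) + b ^ (((1:ℝ) - D) * p)) := by
            rw [← Real.rpow_mul ha.le, ← Real.rpow_mul hb.le]
    have hrsplit : r ^ (-(D + α * p)) = r ^ (-s) * r ^ (-β) := by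
      rw [← Real.rpow_add hr]
      congr 1
      rw [hsdef]; ring
    have bnd1 : r ^ (-s) ≤ a ^ (-s) * (2:ℝ) ^ s := by
      calc r ^ (-s) ≤ (a / 2) ^ (-s) :=
            Real.rpow_le_rpow_of_nonpos (by positivity) (by linarith) (by linarith)
        _ = a ^ (-s) * (2:ℝ) ^ s := by rw [rpow_div_helper (-s) ha.le two_pos, neg_neg]
    have bnd2 : r ^ (-β) ≤ b ^ (-β) * (3:ℝ) ^ β := by
      calc r ^ (-β) ≤ (b / 3) ^ (-β) :=
            Real.rpow_le_rpow_of_nonpos (by positivity) (by linarith) (by linarith)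
        _ = b ^ (-β) * (3:ℝ) ^ β := by
            rw [rpow_div_helper (-β) hb.le three_pos, neg_neg]
    have bnd3 : r ^ (-s) ≤ b ^ (-s) * (3:ℝ) ^ s := by
      calc r ^ (-s) ≤ (b / 3) ^ (-s) :=
            Real.rpow_le_rpow_of_nonpos (by positivity) (by linarith) (by linarith)
        _ = b ^ (-s) * (3:ℝ) ^ s := by rw [rpow_div_helper (-s) hb.le three_pos, neg_neg]
    have bnd4 : r ^ (-β) ≤ a ^ (-β) * (2:ℝ) ^ β := by
      calc r ^ (-β) ≤ (a / 2) ^ (-β) :=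
            Real.rpow_le_rpow_of_nonpos (by positivity) (by linarith) (by linarith)
        _ = a ^ (-β) * (2:ℝ) ^ β := by rw [rpow_div_helper (-β) ha.le two_pos, neg_neg]
    have hcomba : a ^ (((1:ℝ) - D) * p) * a ^ (-s) = a ^ (-β) := by
      rw [← Real.rpow_add ha]
      congr 1
      rw [hsdef, hβ]; ring
    have hcombb : b ^ (((1:ℝ) - D) * p) * b ^ (-s) = b ^ (-β) := by
      rw [← Real.rpow_add hb]
      congr 1
      rw [hsdef, hβ]; ring
    have termx : a ^ (((1:ℝ) - D) * p) * (r ^ (-s) * r ^ (-β)) ≤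
        (2:ℝ) ^ s * (3:ℝ) ^ β * (a ^ (-β) * b ^ (-β)) := by
      calc a ^ (((1:ℝ) - D) * p) * (r ^ (-s) * r ^ (-β))
          ≤ a ^ (((1:ℝ) - D) * p) * ((a ^ (-s) * (2:ℝ) ^ s) * (b ^ (-β) * (3:ℝ) ^ β)) := by
            apply mul_le_mul_of_nonneg_left _ (by positivity)
            apply mul_le_mul bnd1 bnd2 (by positivity) (by positivity)
        _ = (2:ℝ) ^ s * (3:ℝ) ^ β * ((a ^ (((1:ℝ) - D) * p) * a ^ (-s)) * b ^ (-β)) := by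
            ring
        _ = (2:ℝ) ^ s * (3:ℝ) ^ β * (a ^ (-β) * b ^ (-β)) := by rw [hcomba]
    have termy : b ^ (((1:ℝ) - D) * p) * (r ^ (-s) * r ^ (-β)) ≤
        (3:ℝ) ^ s * (2:ℝ) ^ β * (a ^ (-β) * b ^ (-β)) := by
      calc b ^ (((1:ℝ) - D) * p) * (r ^ (-s) * r ^ (-β))
          ≤ b ^ (((1:ℝ) - D) * p) * ((b ^ (-s) * (3:ℝ) ^ s) * (a ^ (-β) * (2:ℝ) ^ β)) := by
            apply mul_le_mul_of_nonneg_left _ (by positivity)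
            apply mul_le_mul bnd3 bnd4 (by positivity) (by positivity)
        _ = (3:ℝ) ^ s * (2:ℝ) ^ β * ((b ^ (((1:ℝ) - D) * p) * b ^ (-s)) * a ^ (-β)) := by
            ring
        _ = (3:ℝ) ^ s * (2:ℝ) ^ β * (a ^ (-β) * b ^ (-β)) := by rw [hcombb]; ring
    have main : ‖kern d x - kern d y‖ ^ p * r ^ (-(D + α * p)) ≤ CB * (a ^ (-β) * b ^ (-β)) := by
      calc ‖kern d x - kern d y‖ ^ p * r ^ (-(D + α * p))
          ≤ ((2:ℝ) ^ p * (a ^ (((1:ℝ) - D) * p) + b ^ (((1:ℝ) - D) * p))) *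
              (r ^ (-s) * r ^ (-β)) := by
            rw [hrsplit]
            apply mul_le_mul_of_nonneg_right powp (by positivity)
        _ = (2:ℝ) ^ p * (a ^ (((1:ℝ) - D) * p) * (r ^ (-s) * r ^ (-β)) +
              b ^ (((1:ℝ) - D) * p) * (r ^ (-s) * r ^ (-β))) := by ring
        _ ≤ (2:ℝ) ^ p * ((2:ℝ) ^ s * (3:ℝ) ^ β * (a ^ (-β) * b ^ (-β)) +
              (3:ℝ) ^ s * (2:ℝ) ^ β * (a ^ (-β) * b ^ (-β))) := by
            apply mul_le_mul_of_nonneg_left _ (by positivity)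
            exact add_le_add termx termy
        _ = CB * (a ^ (-β) * b ^ (-β)) := by rw [hCBdef]; ring
    calc ‖kern d x - kern d y‖ ^ p * r ^ (-(D + α * p))
        ≤ CB * (a ^ (-β) * b ^ (-β)) := main
      _ ≤ (CA + CB) * (a ^ (-β) * r ^ (-β) + a ^ (-β) * b ^ (-β)) :=
          mul_le_mul (le_add_of_nonneg_left hCA) (le_add_of_nonneg_left ht1) ht2
            (by linarith)


lemma ae_ne_point {d : ℕ} (hd : 1 ≤ d) (z : Ed d) :
    ∀ᵐ y ∂(volume : Measure (Ed d)), y ≠ z := by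
  haveI : Nontrivial (Ed d) := nontrivial_Ed hd
  have h : (volume : Measure (Ed d)) {z} = 0 := measure_singleton z
  rw [ae_iff]
  convert h using 2
  ext y
  simp

/-- The singular kernel `K(x) = x/|x|^d` belongs to the local
fractional Sobolev space `W^{α,p}_loc(ℝ^d;ℝ^d)` for every `α ∈ (0,1)` and
`p ∈ [1, d/(d−1+α))`: for every `R > 0`, `K ∈ L^p(B_R)` and the Gagliardo seminorm
`∫_{B_R}∫_{B_R} |K(x)−K(y)|^p / |x−y|^{d+αp} dx dy` is finite. -/
theorem singular_kernel_in_fractional_sobolev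
    (d : ℕ) (hd : 2 ≤ d) (α : ℝ) (hα : α ∈ Ioo (0:ℝ) 1)
    (p : ℝ) (hp : 1 ≤ p) (hp' : p < d / ((d : ℝ) - 1 + α)) :
    ∀ R > (0:ℝ),
      (∫⁻ x in ball (0 : Ed d) R, ENNReal.ofReal (‖kern d x‖ ^ p)) ≠ ⊤ ∧
      (∫⁻ x in ball (0 : Ed d) R, ∫⁻ y in ball (0 : Ed d) R,
        ENNReal.ofReal (‖kern d x - kern d y‖ ^ p / ‖x - y‖ ^ ((d : ℝ) + α * p))) ≠ ⊤ := by
  intro R hR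
  obtain ⟨hα0, hα1⟩ := hα
  have hD2 : (2:ℝ) ≤ (d:ℝ) := by exact_mod_cast hd
  have hden : (0:ℝ) < (d:ℝ) - 1 + α := by linarith
  have key : p * ((d:ℝ) - 1 + α) < d := by
    rw [lt_div_iff₀ hden] at hp'
    exact hp'
  have hp0 : (0:ℝ) < p := by linarith
  have hpα : 0 < p * α := mul_pos hp0 hα0
  haveI : Nontrivial (Ed d) := nontrivial_Ed (by omega)
  constructor
  · -- Lᵖ membership
    set β₁ : ℝ := ((d:ℝ) - 1) * p with hβ₁
    have hβ₁0 : 0 < β₁ := by rw [hβ₁]; nlinarith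
    have hβ₁d : β₁ < d := by rw [hβ₁]; nlinarith
    have hpt : ∀ x : Ed d, ENNReal.ofReal (‖kern d x‖ ^ p) ≤ ENNReal.ofReal (‖x‖ ^ (-β₁)) := by
      intro x
      by_cases hx : x = 0
      · subst hx
        simp only [kern, norm_zero, Real.zero_rpow hp0.ne',
          Real.zero_rpow (neg_ne_zero.mpr hβ₁0.ne'), smul_zero, le_refl]
      · apply le_of_eq
        congr 1
        rw [norm_kern hx, ← Real.rpow_mul (norm_nonneg x)]
        congr 1
        rw [hβ₁]; ring
    exact ne_top_of_le_ne_top (lint_rpow_ball (by omega) hβ₁0 hβ₁d R).ne (lintegral_mono hpt)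
  · -- Gagliardo seminorm
    set β : ℝ := ((d:ℝ) + p * ((d:ℝ) - 1 + α)) / 2 with hβdef
    have hβ0 : 0 < β := by rw [hβdef]; nlinarith
    have hβd : β < d := by rw [hβdef]; nlinarith
    obtain ⟨C, hC0, hC⟩ := master hd hα0 hα1 hp key hβdef
    set J1 := ∫⁻ z in ball (0:Ed d) R, ENNReal.ofReal (‖z‖ ^ (-β)) with hJ1
    set J2 := ∫⁻ z in ball (0:Ed d) (2*R), ENNReal.ofReal (‖z‖ ^ (-β)) with hJ2
    have hJ1top : J1 < ⊤ := lint_rpow_ball (by omega) hβ0 hβd R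
    have hJ2top : J2 < ⊤ := lint_rpow_ball (by omega) hβ0 hβd (2*R)
    set K : ℝ≥0∞ := ENNReal.ofReal C * (J2 + J1) with hK
    have hKtop : K ≠ ⊤ := by
      rw [hK]
      exact (ENNReal.mul_lt_top ENNReal.ofReal_lt_top
        (ENNReal.add_lt_top.mpr ⟨hJ2top, hJ1top⟩)).ne
    have hψm : Measurable fun y : Ed d => ENNReal.ofReal (‖y‖ ^ (-β)) := by fun_prop
    have inner_bound : ∀ x : Ed d, x ∈ ball (0:Ed d) R → x ≠ 0 →
        (∫⁻ y in ball (0:Ed d) R,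
          ENNReal.ofReal (‖kern d x - kern d y‖ ^ p / ‖x - y‖ ^ ((d : ℝ) + α * p))) ≤
        K * ENNReal.ofReal (‖x‖ ^ (-β)) := by
      intro x hxball hx0
      have hψxm : Measurable fun y : Ed d => ENNReal.ofReal (‖x - y‖ ^ (-β)) := by fun_prop
      have ae1 : ∀ᵐ y ∂(volume.restrict (ball (0:Ed d) R)),
          ENNReal.ofReal (‖kern d x - kern d y‖ ^ p / ‖x - y‖ ^ ((d : ℝ) + α * p)) ≤
          ENNReal.ofReal C * (ENNReal.ofReal (‖x‖ ^ (-β)) * ENNReal.ofReal (‖x - y‖ ^ (-β)) +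
            ENNReal.ofReal (‖x‖ ^ (-β)) * ENNReal.ofReal (‖y‖ ^ (-β))) := by
        filter_upwards [ae_restrict_of_ae (ae_ne_point (by omega) (0 : Ed d)),
          ae_restrict_of_ae (ae_ne_point (by omega) x)] with y hy0 hyx
        calc ENNReal.ofReal (‖kern d x - kern d y‖ ^ p / ‖x - y‖ ^ ((d : ℝ) + α * p))
            ≤ ENNReal.ofReal (C * (‖x‖ ^ (-β) * ‖x - y‖ ^ (-β) + ‖x‖ ^ (-β) * ‖y‖ ^ (-β))) :=
              ENNReal.ofReal_le_ofReal (hC x y hx0 hy0 (Ne.symm hyx))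
          _ = ENNReal.ofReal C * (ENNReal.ofReal (‖x‖ ^ (-β)) * ENNReal.ofReal (‖x - y‖ ^ (-β)) +
              ENNReal.ofReal (‖x‖ ^ (-β)) * ENNReal.ofReal (‖y‖ ^ (-β))) := by
              rw [ENNReal.ofReal_mul hC0,
                ENNReal.ofReal_add (by positivity) (by positivity),
                ENNReal.ofReal_mul (by positivity), ENNReal.ofReal_mul (by positivity)]
      calc (∫⁻ y in ball (0:Ed d) R,
            ENNReal.ofReal (‖kern d x - kern d y‖ ^ p / ‖x - y‖ ^ ((d : ℝ) + α * p)))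
          ≤ ∫⁻ y in ball (0:Ed d) R,
              ENNReal.ofReal C * (ENNReal.ofReal (‖x‖ ^ (-β)) * ENNReal.ofReal (‖x - y‖ ^ (-β)) +
                ENNReal.ofReal (‖x‖ ^ (-β)) * ENNReal.ofReal (‖y‖ ^ (-β))) :=
            lintegral_mono_ae ae1
        _ = ENNReal.ofReal C * ∫⁻ y in ball (0:Ed d) R,
              (ENNReal.ofReal (‖x‖ ^ (-β)) * ENNReal.ofReal (‖x - y‖ ^ (-β)) +
                ENNReal.ofReal (‖x‖ ^ (-β)) * ENNReal.ofReal (‖y‖ ^ (-β))) :=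
            lintegral_const_mul' _ _ ENNReal.ofReal_ne_top
        _ = ENNReal.ofReal C *
              ((∫⁻ y in ball (0:Ed d) R, ENNReal.ofReal (‖x‖ ^ (-β)) *
                  ENNReal.ofReal (‖x - y‖ ^ (-β))) +
               ∫⁻ y in ball (0:Ed d) R, ENNReal.ofReal (‖x‖ ^ (-β)) *
                  ENNReal.ofReal (‖y‖ ^ (-β))) := by
            rw [lintegral_add_left (hψxm.const_mul _)]
        _ = ENNReal.ofReal C *
              (ENNReal.ofReal (‖x‖ ^ (-β)) *
                  (∫⁻ y in ball (0:Ed d) R, ENNReal.ofReal (‖x - y‖ ^ (-β))) +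
               ENNReal.ofReal (‖x‖ ^ (-β)) *
                  ∫⁻ y in ball (0:Ed d) R, ENNReal.ofReal (‖y‖ ^ (-β))) := by
            rw [lintegral_const_mul' _ _ ENNReal.ofReal_ne_top,
              lintegral_const_mul' _ _ ENNReal.ofReal_ne_top]
        _ ≤ ENNReal.ofReal C *
              (ENNReal.ofReal (‖x‖ ^ (-β)) * J2 + ENNReal.ofReal (‖x‖ ^ (-β)) * J1) := by
            gcongr
            exact lint_translate hxball
        _ = K * ENNReal.ofReal (‖x‖ ^ (-β)) := by rw [hK]; ring
    have outer : (∫⁻ x in ball (0:Ed d) R, ∫⁻ y in ball (0:Ed d) R,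
        ENNReal.ofReal (‖kern d x - kern d y‖ ^ p / ‖x - y‖ ^ ((d : ℝ) + α * p))) ≤
        ∫⁻ x in ball (0:Ed d) R, K * ENNReal.ofReal (‖x‖ ^ (-β)) := by
      apply lintegral_mono_ae
      filter_upwards [ae_restrict_of_ae (ae_ne_point (by omega) (0 : Ed d)),
        ae_restrict_mem measurableSet_ball] with x hx0 hxmem
      exact inner_bound x hxmem hx0
    refine ne_top_of_le_ne_top ?_ outer
    rw [lintegral_const_mul' _ _ hKtop]
    exact (ENNReal.mul_lt_top (lt_top_iff_ne_top.mpr hKtop) hJ1top).ne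

end
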